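/- Let a(x) = (1 - (3 - e)x)^2 where e is Euler's number. Then a(0) = 1, a is continuous on [0,1], a is (weakly) decreasing on [0,1], and for every fixed y ∈ [0,1] the function x ↦ log(1 - y·x·a(x)) is convex on [0,1]. -/

import Mathlib

open Real Set

private lemma key_ineq {c x : ℝ} (hc1 : 0.2817 < c) (hc2 : c < 0.2818)
    (hx0 : 0 ≤ x) (hx1 : x ≤ 1) :
    (1 - 4*c*x + 3*c^2*x^2)^2 ≤ (4*c - 6*c^2*x) * (1 - x*(1-c*x)^2) := by
  have hc0 : (0:ℝ) ≤ c := by linarith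
  have t1 : 0 ≤ (4*c - 14*c^2) * x :=
    mul_nonneg (by nlinarith) hx0
  have t2 : 0 ≤ 8*c^2 * (x*(1-x)) :=
    mul_nonneg (by positivity) (mul_nonneg hx0 (by linarith))
  have t3 : 0 ≤ c^3 * x^3 * (8 - 3*c*x) := by
    have : c*x ≤ 1 := by nlinarith
    have h8 : (0:ℝ) ≤ 8 - 3*c*x := by nlinarith
    positivity
  nlinarith [t1, t2, t3]

private lemma g_le {c x : ℝ} (hc1 : 0.2817 < c) (hc2 : c < 0.2818)
    (hx0 : 0 ≤ x) (hx1 : x ≤ 1) : x*(1-c*x)^2 ≤ (1-c)^2 := by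
  have hc0 : (0:ℝ) ≤ c := by linarith
  have hbr : 0 ≤ 1 - 2*c*(1+x) + c^2*(1+x+x^2) := by
    have h1 : 0 ≤ (1-x) * (2*c - 2*c^2 - c^2*x) :=
      mul_nonneg (by linarith) (by nlinarith [mul_nonneg (sq_nonneg c) hx0])
    nlinarith [h1]
  nlinarith [mul_nonneg (sub_nonneg.2 hx1) hbr]

private lemma Nf_pos {c x y : ℝ} (hc1 : 0.2817 < c) (hc2 : c < 0.2818)
    (hx0 : 0 ≤ x) (hx1 : x ≤ 1) (hy0 : 0 ≤ y) (hy1 : y ≤ 1) :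
    0 < 1 - y * (x * (1 - c*x)^2) := by
  have hg0 : 0 ≤ x*(1-c*x)^2 := mul_nonneg hx0 (sq_nonneg _)
  have h1 : y * (x*(1-c*x)^2) ≤ x*(1-c*x)^2 := mul_le_of_le_one_left hg0 hy1
  have h2 := g_le hc1 hc2 hx0 hx1
  nlinarith [h1, h2]

theorem stmt_5 (a : ℝ → ℝ)
    (ha : ∀ x, a x = (1 - (3 - Real.exp 1) * x)^2) :
    a 0 = 1 ∧ ContinuousOn a (Set.Icc 0 1) ∧ AntitoneOn a (Set.Icc 0 1) ∧
    ∀ y ∈ Set.Icc (0:ℝ) 1,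
      ConvexOn ℝ (Set.Icc (0:ℝ) 1) (fun x => Real.log (1 - y * x * a x)) := by
  have hfe := funext ha
  subst hfe
  set c : ℝ := 3 - Real.exp 1 with hc
  have hc1 : 0.2817 < c := by
    have := Real.exp_one_lt_d9; rw [hc]; norm_num at this ⊢; linarith
  have hc2 : c < 0.2818 := by
    have := Real.exp_one_gt_d9; rw [hc]; norm_num at this ⊢; linarith
  refine ⟨by norm_num, ?_, ?_, ?_⟩
  · fun_prop
  · intro u hu v hv huv
    simp only [mem_Icc] at hu hv
    dsimp only
    have hc0 : (0:ℝ) ≤ c := by linarith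
    have h1 : 0 ≤ c*(v-u) * (2 - c*(u+v)) :=
      mul_nonneg (mul_nonneg hc0 (by linarith)) (by nlinarith [hu.1, hu.2, hv.2])
    nlinarith [h1]
  · intro y hy
    simp only [mem_Icc] at hy
    obtain ⟨hy0, hy1⟩ := hy
    have hmeq : (fun x => Real.log (1 - y * x * (1 - c*x)^2)) =
        (fun x => Real.log (1 - y * (x * (1 - c*x)^2))) := by
      funext x; ring_nf
    rw [hmeq]
    set N : ℝ → ℝ := fun x => 1 - y * (x * (1 - c*x)^2) with hN
    set N1 : ℝ → ℝ := fun x => -(y * (1 - 4*c*x + 3*c^2*x^2)) with hN1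
    set N2 : ℝ → ℝ := fun x => -(y * (6*c^2*x - 4*c)) with hN2
    have hNd : ∀ x : ℝ, HasDerivAt N (N1 x) x := by
      intro x
      have h1 : HasDerivAt (fun x : ℝ => 1 - c*x) (-c) x := by
        simpa using ((hasDerivAt_id x).const_mul c).const_sub 1
      have h2 := h1.pow 2
      have h3 := ((hasDerivAt_id x).mul h2).const_mul y
      have h4 := h3.const_sub 1
      convert h4 using 1
      · rfl
      · rfl
      show -(y * (1 - 4*c*x + 3*c^2*x^2)) = _
      simp only [id_eq, Pi.pow_apply]; push_cast; ring
      · rfl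
    have hN1d : ∀ x : ℝ, HasDerivAt N1 (N2 x) x := by
      intro x
      have ha1 : HasDerivAt (fun x : ℝ => 1 - 4*c*x) (-(4*c)) x := by
        simpa using ((hasDerivAt_id x).const_mul (4*c)).const_sub 1
      have ha2 : HasDerivAt (fun x : ℝ => 3*c^2*x^2) (3*c^2*(2*x)) x := by
        simpa using ((hasDerivAt_pow 2 x).const_mul (3*c^2))
      have h2 := ((ha1.add ha2).const_mul y).neg
      convert h2 using 1
      · rfl
      · rfl
      show -(y * (6*c^2*x - 4*c)) = _
      ring
      · rfl
    have hNpos : ∀ x ∈ Icc (0:ℝ) 1, 0 < N x := fun x hx =>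
      Nf_pos hc1 hc2 hx.1 hx.2 hy0 hy1
    have hNposI : ∀ x ∈ interior (Icc (0:ℝ) 1), 0 < N x := fun x hx =>
      hNpos x (interior_subset hx)
    refine convexOn_of_hasDerivWithinAt2_nonneg (convex_Icc 0 1)
      (f' := fun x => N1 x / N x)
      (f'' := fun x => (N2 x * N x - N1 x * N1 x) / N x ^ 2) ?_ ?_ ?_ ?_
    · exact (Continuous.continuousOn (by fun_prop)).log (fun x hx => (hNpos x hx).ne')
    · intro x hx
      exact ((hNd x).log (hNposI x hx).ne').hasDerivWithinAt
    · intro x hx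
      exact ((hN1d x).div (hNd x) (hNposI x hx).ne').hasDerivWithinAt
    · intro x hx
      have hNx := hNposI x hx
      rw [interior_Icc] at hx
      obtain ⟨hx0', hx1'⟩ := hx
      have hx0 := le_of_lt hx0'
      have hx1 := le_of_lt hx1'
      have key := key_ineq hc1 hc2 hx0 hx1
      have hg0 : 0 ≤ x*(1-c*x)^2 := mul_nonneg hx0 (sq_nonneg _)
      have hA : 0 ≤ 4*c - 6*c^2*x := by nlinarith [sq_nonneg c]
      have hnum : 0 ≤ N2 x * N x - N1 x * N1 x := by
        simp only [hN, hN1, hN2]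
        have u1 : 0 ≤ y * ((4*c - 6*c^2*x) * (1 - x*(1-c*x)^2) - (1 - 4*c*x + 3*c^2*x^2)^2) :=
          mul_nonneg hy0 (by linarith [key])
        have u2 : 0 ≤ (y * (1-y)) * ((4*c - 6*c^2*x) * (x*(1-c*x)^2)) :=
          mul_nonneg (mul_nonneg hy0 (by linarith)) (mul_nonneg hA hg0)
        have u3 : 0 ≤ (y * (1-y)) * (1 - 4*c*x + 3*c^2*x^2)^2 :=
          mul_nonneg (mul_nonneg hy0 (by linarith)) (sq_nonneg _)
        nlinarith [u1, u2, u3]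
      exact div_nonneg hnum (sq_nonneg _)
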